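/- Let L be a non-contractible compact metric ANR, X a normal space, F ⊆ X a closed subset, and α an ordinal. If L-Ind F = 0 and L-Ind E ≤ α for every closed subset E ⊆ X disjoint from F, then L-Ind X ≤ α. -/

import Mathlib

open Set Topology Cardinal

noncomputable section

attribute [local instance] Classical.propDecidable

/-- Values of dimension functions: `⊥ : WithBot Ordinal.{0}` encodes `−1`,
ordinals are the usual values, and `⊤` encodes `∞`. -/
abbrev Dim : Type 1 := WithTop (WithBot Ordinal.{0})

/-- An ordinal viewed as a dimension value. -/
def Dim.ofOrdinal (a : Ordinal.{0}) : Dim := ((a : WithBot Ordinal.{0}) : Dim)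

/-- The dimension value `−1`. -/
def Dim.minusOne : Dim := ((⊥ : WithBot Ordinal.{0}) : Dim)

/-- An integer `m ≥ −1` viewed as a dimension value. -/
def Dim.ofInt (m : ℤ) : Dim := if 0 ≤ m then Dim.ofOrdinal m.toNat else Dim.minusOne

/-- `A` is a `K`-tuple for the simplicial complex `K` on the vertex set `Fin m`:
whenever the members indexed by a nonempty `I` have a common point, `I` spans a
simplex of `K`. -/
def IsKTuple {m : ℕ} (K : Finset (Fin m) → Prop) {X : Type} (A : Fin m → Set X) : Prop :=
  ∀ I : Finset (Fin m), I.Nonempty → (⋂ i ∈ I, A i).Nonempty → K I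

/-- `K` is an abstract (finite) simplicial complex with vertex set `Fin m`:
it is closed under passing to nonempty subsets, and contains every vertex. -/
def IsComplex {m : ℕ} (K : Finset (Fin m) → Prop) : Prop :=
  (∀ s t : Finset (Fin m), s ⊆ t → s.Nonempty → K t → K s) ∧ ∀ i, K {i}

/-- The boundary complex `∂Δ^k` of the `k`-simplex: all proper subsets of the
`k+1` vertices span simplices. -/
def bComplex (k : ℕ) : Finset (Fin (k + 1)) → Prop := fun s => s ≠ Finset.univ

/-- `U` is an (open) `K`-neighbourhood of the tuple `F`. -/
def KNbhd {m : ℕ} (K : Finset (Fin m) → Prop) {X : Type} [TopologicalSpace X]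
    (F U : Fin m → Set X) : Prop :=
  (∀ i, IsOpen (U i)) ∧ IsKTuple K U ∧ ∀ i, F i ⊆ U i

/-- Auxiliary form of `K-Ind X ≤ α`, defined by transfinite recursion on `α`:
every closed `K`-tuple has a `K`-neighbourhood whose corresponding `K`-partition
is either empty (dimension `−1`) or has `K-Ind < α`. -/
def KIndLeAux {m : ℕ} (K : Finset (Fin m) → Prop) :
    Ordinal.{0} → ∀ X : Type, TopologicalSpace X → Prop :=
  (wellFounded_lt (α := Ordinal.{0})).fix fun α rec X tX =>
    letI := tX
    ∀ F : Fin m → Set X, (∀ i, IsClosed (F i)) → IsKTuple K F →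
      ∃ U : Fin m → Set X, (∀ i, IsOpen (U i)) ∧ IsKTuple K U ∧ (∀ i, F i ⊆ U i) ∧
        ((⋃ i, U i)ᶜ = (∅ : Set X) ∨
          ∃ β : Set.Iio α, rec β.1 β.2 (↥((⋃ i, U i)ᶜ)) inferInstance)

/-- `K-Ind X ≤ α` (for an ordinal `α ≥ 0`). -/
def KIndLE {m : ℕ} (K : Finset (Fin m) → Prop) (X : Type) [tX : TopologicalSpace X]
    (α : Ordinal.{0}) : Prop :=
  KIndLeAux K α X tX

/-- Fedorchuk's inductive dimension `K-Ind` modulo a simplicial complex `K`;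
`−1` for the empty space, the least `α` with `K-Ind X ≤ α` otherwise, `∞` if none. -/
def KInd {m : ℕ} (K : Finset (Fin m) → Prop) (X : Type) [TopologicalSpace X] : Dim :=
  if IsEmpty X then Dim.minusOne
  else if ∃ α, KIndLE K X α then Dim.ofOrdinal (sInf {α | KIndLE K X α}) else ⊤

/-- The set of `K`-obstruction points of an open `K`-tuple `U`: points covered
by no `K`-neighbourhood of `U`. -/
def KObs {m : ℕ} (K : Finset (Fin m) → Prop) {X : Type} [TopologicalSpace X]
    (U : Fin m → Set X) : Set X :=
  {x | ¬ ∃ V : Fin m → Set X, KNbhd K U V ∧ x ∈ ⋃ i, V i}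

/-- `X` is strongly `α`-dimensional: `K-Ind X` is a positive ordinal `α` and some
closed `K`-tuple admits no `K`-neighbourhood `U` without obstruction points whose
corresponding `K`-partition has `K-Ind < α`. -/
def KStrongly {m : ℕ} (K : Finset (Fin m) → Prop) (X : Type) [TopologicalSpace X] : Prop :=
  (∃ α : Ordinal.{0}, 0 < α ∧ KInd K X = Dim.ofOrdinal α) ∧
  ∃ F : Fin m → Set X, (∀ i, IsClosed (F i)) ∧ IsKTuple K F ∧
    ∀ U : Fin m → Set X, KNbhd K F U →
      KInd K (↥((⋃ i, U i)ᶜ)) < KInd K X → KObs K U ≠ ∅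

/-- The dimensional strength degree `K-str X ∈ {0,1}`. -/
def KStr {m : ℕ} (K : Finset (Fin m) → Prop) (X : Type) [TopologicalSpace X] : ℕ :=
  if KStrongly K X then 1 else 0

/-- `K-dim X ≤ n`: any `n+1` closed `K`-tuples admit `K`-partitions with empty
intersection. -/
def KDimLE {m : ℕ} (K : Finset (Fin m) → Prop) (X : Type) [TopologicalSpace X] (n : ℕ) : Prop :=
  ∀ F : Fin (n + 1) → Fin m → Set X,
    (∀ j i, IsClosed (F j i)) → (∀ j, IsKTuple K (F j)) →
    ∃ U : Fin (n + 1) → Fin m → Set X, (∀ j, KNbhd K (F j) (U j)) ∧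
      (⋂ j, (⋃ i, U j i)ᶜ) = (∅ : Set X)

/-- Fedorchuk's dimension `K-dim` modulo a simplicial complex `K`. -/
def KDim {m : ℕ} (K : Finset (Fin m) → Prop) (X : Type) [TopologicalSpace X] : Dim :=
  if IsEmpty X then Dim.minusOne
  else if ∃ n, KDimLE K X n then Dim.ofOrdinal ((sInf {n | KDimLE K X n} : ℕ) : Ordinal.{0}) else ⊤

/-- `dim X ≤ n` for the Lebesgue covering dimension: every finite open cover has
an open shrinking of order at most `n+1`. -/
def CovDimLE (X : Type) [TopologicalSpace X] (n : ℕ) : Prop :=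
  ∀ (ι : Type), Finite ι → ∀ U : ι → Set X, (∀ i, IsOpen (U i)) → (⋃ i, U i) = Set.univ →
    ∃ V : ι → Set X, (∀ i, IsOpen (V i)) ∧ (∀ i, V i ⊆ U i) ∧ (⋃ i, V i) = Set.univ ∧
      ∀ x : X, ({i | x ∈ V i}).ncard ≤ n + 1

/-- The Lebesgue covering dimension. -/
def covDim (X : Type) [TopologicalSpace X] : Dim :=
  if IsEmpty X then Dim.minusOne
  else if ∃ n, CovDimLE X n then Dim.ofOrdinal ((sInf {n | CovDimLE X n} : ℕ) : Ordinal.{0}) else ⊤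

/-- `Ind X ≤ n` for the large inductive dimension, by recursion on `n`. -/
def IndLE : ℕ → ∀ X : Type, TopologicalSpace X → Prop
  | 0, X, tX =>
    letI := tX
    ∀ F U : Set X, IsClosed F → IsOpen U → F ⊆ U →
      ∃ V : Set X, IsOpen V ∧ F ⊆ V ∧ V ⊆ U ∧ frontier V = ∅
  | n + 1, X, tX =>
    letI := tX
    ∀ F U : Set X, IsClosed F → IsOpen U → F ⊆ U →
      ∃ V : Set X, IsOpen V ∧ F ⊆ V ∧ V ⊆ U ∧ IndLE n (↥(frontier V)) inferInstance

/-- The large inductive dimension `Ind`. -/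
def IndDim (X : Type) [tX : TopologicalSpace X] : Dim :=
  if IsEmpty X then Dim.minusOne
  else if ∃ n, IndLE n X tX then Dim.ofOrdinal ((sInf {n | IndLE n X tX} : ℕ) : Ordinal.{0}) else ⊤

/-- The relation generating the topological join `A ∗ B`: the copy of `B` is
collapsed at parameter `0`, the copy of `A` at parameter `1`. -/
def JoinRel (A B : Type) : (A × B × unitInterval) → (A × B × unitInterval) → Prop :=
  fun p q => (p.2.2 = 0 ∧ q.2.2 = 0 ∧ p.1 = q.1) ∨ (p.2.2 = 1 ∧ q.2.2 = 1 ∧ p.2.1 = q.2.1)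

/-- The topological join `A ∗ B`. -/
abbrev Join (A B : Type) [TopologicalSpace A] [TopologicalSpace B] : Type :=
  Quot (JoinRel A B)

/-- Auxiliary construction of the join of `n+1` copies of `L`, bundled with its
topology. -/
def JoinPowAux (L : Type) (tL : TopologicalSpace L) : ℕ → (T : Type) × TopologicalSpace T
  | 0 => ⟨L, tL⟩
  | n + 1 =>
    let p := JoinPowAux L tL n
    letI := tL
    letI := p.2
    ⟨Join L p.1, inferInstance⟩

/-- The join `L ∗ ⋯ ∗ L` of `n+1` copies of `L`. -/
def JoinPow (L : Type) [tL : TopologicalSpace L] (n : ℕ) : Type :=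
  (JoinPowAux L tL n).1

instance joinPowTopologicalSpace (L : Type) [tL : TopologicalSpace L] (n : ℕ) :
    TopologicalSpace (JoinPow L n) :=
  (JoinPowAux L tL n).2

/-- `L-dim X ≤ n`: every continuous map from a closed subset of `X` to the join
of `n+1` copies of `L` extends continuously over `X`. -/
def LDimLE (L : Type) [TopologicalSpace L] (X : Type) [TopologicalSpace X] (n : ℕ) : Prop :=
  ∀ F : Set X, IsClosed F → ∀ f : C(F, JoinPow L n),
    ∃ g : C(X, JoinPow L n), ∀ x : F, g x = f x

/-- Fedorchuk's dimension `L-dim` modulo an ANR `L`. -/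
def LDim (L : Type) [TopologicalSpace L] (X : Type) [TopologicalSpace X] : Dim :=
  if IsEmpty X then Dim.minusOne
  else if ∃ n, LDimLE L X n then Dim.ofOrdinal ((sInf {n | LDimLE L X n} : ℕ) : Ordinal.{0}) else ⊤

/-- Auxiliary form of `L-Ind X ≤ α`, by transfinite recursion on `α`: every map
to `L` from a closed subset of `X` has an `L`-partition which is either empty or
has `L-Ind < α`. -/
def LIndLeAux (L : Type) [TopologicalSpace L] :
    Ordinal.{0} → ∀ X : Type, TopologicalSpace X → Prop :=
  (wellFounded_lt (α := Ordinal.{0})).fix fun α rec X tX =>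
    letI := tX
    ∀ F : Set X, IsClosed F → ∀ f : C(F, L),
      ∃ U : Set X, IsOpen U ∧ ∃ hFU : F ⊆ U,
        (∃ g : C(U, L), ∀ (x : X) (hx : x ∈ F), g ⟨x, hFU hx⟩ = f ⟨x, hx⟩) ∧
        (Uᶜ = (∅ : Set X) ∨ ∃ β : Set.Iio α, rec β.1 β.2 (↥(Uᶜ)) inferInstance)

/-- `L-Ind X ≤ α` (for an ordinal `α ≥ 0`). -/
def LIndLE (L : Type) [TopologicalSpace L] (X : Type) [tX : TopologicalSpace X]
    (α : Ordinal.{0}) : Prop :=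
  LIndLeAux L α X tX

/-- Fedorchuk's inductive dimension `L-Ind` modulo an ANR `L`. -/
def LInd (L : Type) [TopologicalSpace L] (X : Type) [TopologicalSpace X] : Dim :=
  if IsEmpty X then Dim.minusOne
  else if ∃ α, LIndLE L X α then Dim.ofOrdinal (sInf {α | LIndLE L X α}) else ⊤

/-- `L` is an absolute neighbourhood retract (for metric spaces): `L` is
metrizable and whenever a closed subset `A` of a metric space is homeomorphic to
`L` via `e`, the map `e` extends continuously over a neighbourhood of `A`. -/
def IsANR (L : Type) [TopologicalSpace L] : Prop :=
  TopologicalSpace.MetrizableSpace L ∧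
  ∀ (M : Type) [MetricSpace M], ∀ A : Set M, IsClosed A → ∀ e : A ≃ₜ L,
    ∃ U : Set M, IsOpen U ∧ ∃ hAU : A ⊆ U, ∃ r : C(U, L),
      ∀ (a : M) (ha : a ∈ A), r ⟨a, hAU ha⟩ = e ⟨a, ha⟩

/-- `L-Ind_{b+} X`: the least dimension value `d` such that some open
neighbourhood of `b` has closure of `L-Ind` at most `d`. -/
def LIndPlus (L : Type) [TopologicalSpace L] {X : Type} [TopologicalSpace X] (b : X) : Dim :=
  sInf {d : Dim | ∃ U : Set X, IsOpen U ∧ b ∈ U ∧ LInd L (↥(closure U)) ≤ d}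

/-- The set `K(X) = {b ∈ X : L-Ind_{b+} X = L-Ind X}`. -/
def LKset (L : Type) [TopologicalSpace L] (X : Type) [TopologicalSpace X] : Set X :=
  {b | LIndPlus L b = LInd L X}

/-- The weight of a topological space: the least cardinality of a basis. -/
def tWeight (X : Type) [TopologicalSpace X] : Cardinal :=
  sInf {c | ∃ B : Set (Set X), TopologicalSpace.IsTopologicalBasis B ∧ #B = c}

/-- The family `𝒮_X` of all subsets of `X` that are finite or homeomorphic to the
one-point compactification `A_{ℵ₀}` of a countably infinite discrete space. -/
def SFam (X : Type) [TopologicalSpace X] : Set (Set X) :=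
  {S | S.Finite ∨ Nonempty (↥S ≃ₜ OnePoint ℕ)}

/-- The relation generating the quotient `N` in the `Z(X,Y)` construction:
each set `{μ} × {x} × Y` is collapsed to a point. -/
def ZRel (ι X Y : Type) : (OnePoint ι × X × Y) → (OnePoint ι × X × Y) → Prop :=
  fun p q => p.1 = OnePoint.infty ∧ q.1 = OnePoint.infty ∧ p.2.1 = q.2.1

/-- The quotient space `N` of `A_𝔪 × X × Y`. -/
abbrev ZQuot (ι X Y : Type) [TopologicalSpace ι] [TopologicalSpace X] [TopologicalSpace Y] :
    Type :=
  Quot (ZRel ι X Y)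

/-- The subset `Z(X,Y) = ⋃_{α ∈ A_𝔪} H(α)` of `N`:  `H(μ) = π₁({μ} × X × Y)` and
`H(α) = π₁({α} × φ(α) × Y)` for `α ≠ μ`. -/
def ZSet (ι X Y : Type) [TopologicalSpace ι] [TopologicalSpace X] [TopologicalSpace Y]
    (φ : ι → Set X) : Set (ZQuot ι X Y) :=
  {z | ∃ p : OnePoint ι × X × Y, Quot.mk (ZRel ι X Y) p = z ∧
        (p.1 = OnePoint.infty ∨ ∃ i : ι, p.1 = (i : OnePoint ι) ∧ p.2.1 ∈ φ i)}

/-- The space `Z(X,Y)` (for the data `ι`, `φ`), with the subspace topology. -/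
abbrev ZSpace (ι X Y : Type) [TopologicalSpace ι] [TopologicalSpace X] [TopologicalSpace Y]
    (φ : ι → Set X) : Type :=
  ↥(ZSet ι X Y φ)

/-- The subset `H(μ)` of `Z(X,Y)`. -/
def ZHmu (ι X Y : Type) [TopologicalSpace ι] [TopologicalSpace X] [TopologicalSpace Y]
    (φ : ι → Set X) : Set (ZSpace ι X Y φ) :=
  {z | ∃ (x : X) (y : Y), (z : ZQuot ι X Y) = Quot.mk (ZRel ι X Y) (OnePoint.infty, x, y)}

/-- The projection `π_X : N → X`, `π₁(α,x,y) ↦ x`. -/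
def ZQuotProjX {ι X Y : Type} [TopologicalSpace ι] [TopologicalSpace X] [TopologicalSpace Y] :
    ZQuot ι X Y → X :=
  Quot.lift (fun p => p.2.1) (fun _ _ h => h.2.2)

/-- The projection `π_X : Z(X,Y) → X`. -/
def ZProjX {ι X Y : Type} [TopologicalSpace ι] [TopologicalSpace X] [TopologicalSpace Y]
    (φ : ι → Set X) : ZSpace ι X Y φ → X :=
  fun z => ZQuotProjX (z : ZQuot ι X Y)

/-- The cardinality requirements on the index set `ι` (of cardinality `𝔪`) in the
`Z(X,Y)` construction: `𝔪 ≥ max {ℵ₀, (wX)⁺, (wY)⁺, card 𝒮_X}`. -/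
def ZCardOK (X Y ι : Type) [TopologicalSpace X] [TopologicalSpace Y] : Prop :=
  ℵ₀ ≤ #ι ∧ tWeight X < #ι ∧ tWeight Y < #ι ∧ #(SFam X) ≤ #ι

/-- The requirements on `φ : A_𝔪 \ {μ} → 𝒮_X`: it takes values in `𝒮_X` and every
fibre has cardinality `𝔪`. -/
def ZPhiOK {X ι : Type} [TopologicalSpace X] (φ : ι → Set X) : Prop :=
  (∀ i, φ i ∈ SFam X) ∧ ∀ S ∈ SFam X, #(↥(φ ⁻¹' {S})) = #ι


section Auxiliary

theorem LIndLE_iff (L : Type) [TopologicalSpace L] (X : Type) [tX : TopologicalSpace X]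
    (α : Ordinal.{0}) :
    LIndLE L X α ↔
      ∀ F : Set X, IsClosed F → ∀ f : C(F, L),
        ∃ U : Set X, IsOpen U ∧ ∃ hFU : F ⊆ U,
          (∃ g : C(U, L), ∀ (x : X) (hx : x ∈ F), g ⟨x, hFU hx⟩ = f ⟨x, hx⟩) ∧
          (Uᶜ = (∅ : Set X) ∨ ∃ β : Set.Iio α, LIndLE L (↥(Uᶜ)) β.1) := by
  unfold LIndLE LIndLeAux
  rw [WellFounded.fix_eq]

theorem contOn_paste {X Y : Type} [TopologicalSpace X] [TopologicalSpace Y]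
    {f : X → Y} {s t u : Set X} (hs : IsClosed s) (ht : IsClosed t) (hu : u ⊆ s ∪ t)
    (h1 : ContinuousOn f (s ∩ u)) (h2 : ContinuousOn f (t ∩ u)) : ContinuousOn f u := by
  intro x hx
  by_cases hxs : x ∈ s <;> by_cases hxt : x ∈ t
  · exact ((h1 x ⟨hxs, hx⟩).union (h2 x ⟨hxt, hx⟩)).mono
      fun y hy => (hu hy).elim (fun h => Or.inl ⟨h, hy⟩) fun h => Or.inr ⟨h, hy⟩
  · refine (h1 x ⟨hxs, hx⟩).mono_of_mem_nhdsWithin ?_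
    exact mem_nhdsWithin.mpr ⟨tᶜ, ht.isOpen_compl, hxt, fun y hy =>
      ⟨(hu hy.2).resolve_right hy.1, hy.2⟩⟩
  · refine (h2 x ⟨hxt, hx⟩).mono_of_mem_nhdsWithin ?_
    exact mem_nhdsWithin.mpr ⟨sᶜ, hs.isOpen_compl, hxs, fun y hy =>
      ⟨(hu hy.2).resolve_left hy.1, hy.2⟩⟩
  · exact absurd (hu hx) (by simp [hxs, hxt])

end Auxiliary

section Transfer

theorem lindle_transfer (L : Type) [TopologicalSpace L] (α : Ordinal.{0}) :
    ∀ (X Y : Type) (tX : TopologicalSpace X) (tY : TopologicalSpace Y) (φ : Y → X),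
      @Topology.IsClosedEmbedding Y X tY tX φ →
      LIndLeAux L α X tX → LIndLeAux L α Y tY := by
  induction α using Ordinal.induction with
  | h α IH =>
    intro X Y tX tY φ hφ hX
    letI := tX; letI := tY
    replace hX : LIndLE L X α := hX
    show LIndLE L Y α
    rw [LIndLE_iff] at hX ⊢
    intro C hC f
    have hC0 : IsClosed (φ '' C) := hφ.isClosedMap _ hC
    have hemb : Topology.IsEmbedding (fun y : ↥C => φ y.1) :=
      hφ.isEmbedding.comp Topology.IsEmbedding.subtypeVal
    have hrange : Set.range (fun y : ↥C => φ y.1) = φ '' C := by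
      ext x
      constructor
      · rintro ⟨y, rfl⟩; exact ⟨y.1, y.2, rfl⟩
      · rintro ⟨y, hy, rfl⟩; exact ⟨⟨y, hy⟩, rfl⟩
    let e : ↥C ≃ₜ ↥(φ '' C) :=
      hemb.toHomeomorph.trans (Homeomorph.setCongr hrange)
    obtain ⟨U₀, hU₀o, hsub₀, ⟨g₀, hg₀⟩, hrest₀⟩ :=
      hX (φ '' C) hC0 (f.comp ((e.symm : ↥(φ '' C) ≃ₜ ↥C) : C(↥(φ '' C), ↥C)))
    refine ⟨φ ⁻¹' U₀, hU₀o.preimage hφ.continuous, fun y hy => hsub₀ ⟨y, hy, rfl⟩, ?_, ?_⟩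
    · refine ⟨g₀.comp ⟨fun y => ⟨φ y.1, y.2⟩,
        Continuous.subtype_mk (hφ.continuous.comp continuous_subtype_val) _⟩, ?_⟩
      intro y hy
      have h1 := hg₀ (φ y) ⟨y, hy, rfl⟩
      have h2 : e.symm ⟨φ y, ⟨y, hy, rfl⟩⟩ = ⟨y, hy⟩ :=
        e.symm_apply_eq.mpr (Subtype.ext rfl)
      calc g₀ ⟨φ y, hsub₀ ⟨y, hy, rfl⟩⟩ = f (e.symm ⟨φ y, ⟨y, hy, rfl⟩⟩) := h1
        _ = f ⟨y, hy⟩ := congrArg f h2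
    · rcases hrest₀ with h | ⟨β, hβ⟩
      · left
        rw [← Set.preimage_compl, h, Set.preimage_empty]
      · right
        refine ⟨β, ?_⟩
        have hφ' : Topology.IsClosedEmbedding
            (fun y : ↥((φ ⁻¹' U₀)ᶜ) => (⟨φ y.1, y.2⟩ : ↥(U₀ᶜ))) := by
          have h1 : Topology.IsClosedEmbedding
              (fun y : ↥((φ ⁻¹' U₀)ᶜ) => φ y.1) := by
            refine hφ.comp ?_
            exact Topology.IsClosedEmbedding.subtypeVal (by
              exact (hU₀o.preimage hφ.continuous).isClosed_compl)
          constructor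
          · refine Topology.IsEmbedding.of_comp ?_ continuous_subtype_val h1.isEmbedding
            exact Continuous.subtype_mk (hφ.continuous.comp continuous_subtype_val) _
          · have : Set.range (fun y : ↥((φ ⁻¹' U₀)ᶜ) => (⟨φ y.1, y.2⟩ : ↥(U₀ᶜ))) =
                Subtype.val ⁻¹' (Set.range fun y : ↥((φ ⁻¹' U₀)ᶜ) => φ y.1) := by
              ext z
              constructor
              · rintro ⟨y, rfl⟩; exact ⟨y, rfl⟩
              · rintro ⟨y, hy⟩; exact ⟨y, Subtype.ext hy⟩
            rw [this]
            exact h1.isClosed_range.preimage continuous_subtype_val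
        exact IH β.1 β.2 _ _ _ _ _ hφ' hβ
    
end Transfer

section ANRExt

theorem anr_ext (L : Type) [MetricSpace L] [CompactSpace L] [Nonempty L] (hANR : IsANR L)
    {X : Type} [TopologicalSpace X] [NormalSpace X] {A : Set X} (hA : IsClosed A)
    (f : C(↥A, L)) :
    ∃ U : Set X, IsOpen U ∧ ∃ hAU : A ⊆ U, ∃ g : C(↥U, L),
      ∀ (x : X) (hx : x ∈ A), g ⟨x, hAU hx⟩ = f ⟨x, hx⟩ := by
  obtain ⟨u, hu⟩ := TopologicalSpace.exists_dense_seq L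
  set ψ : L → (ℕ → ℝ) := fun l n => dist l (u n) with hψdef
  have hψc : Continuous ψ := continuous_pi fun n => Continuous.dist continuous_id continuous_const
  have hψi : Function.Injective ψ := by
    intro a b hab
    by_contra hne
    have hd : (0 : ℝ) < dist a b := dist_pos.mpr hne
    obtain ⟨n, hn⟩ := Metric.denseRange_iff.mp hu a (dist a b / 2) (by linarith)
    have h1 : dist a (u n) = dist b (u n) := congrFun hab n
    have h2 : dist a b ≤ dist a (u n) + dist b (u n) := dist_triangle_right a b (u n)
    rw [← h1] at h2
    linarith
  have hψe : Topology.IsClosedEmbedding ψ := hψc.isClosedEmbedding hψi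
  letI : MetricSpace (ℕ → ℝ) := TopologicalSpace.metrizableSpaceMetric (ℕ → ℝ)
  obtain ⟨V, hVo, hAV, r, hr⟩ := hANR.2 (ℕ → ℝ) (Set.range ψ) hψe.isClosed_range
    hψe.isEmbedding.toHomeomorph.symm
  obtain ⟨G, hG⟩ := ContinuousMap.exists_restrict_eq hA (ContinuousMap.comp ⟨ψ, hψc⟩ f)
  have hGA : ∀ (x : X) (hx : x ∈ A), G x = ψ (f ⟨x, hx⟩) := fun x hx =>
    ContinuousMap.congr_fun hG ⟨x, hx⟩
  refine ⟨G ⁻¹' V, hVo.preimage G.continuous, fun x hx => by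
      rw [Set.mem_preimage, hGA x hx]; exact hAV (Set.mem_range_self _), ?_⟩
  refine ⟨r.comp ⟨fun y => ⟨G y.1, y.2⟩,
    Continuous.subtype_mk (G.continuous.comp continuous_subtype_val) _⟩, ?_⟩
  intro x hx
  have h2 : (⟨G x, (by rw [hGA x hx]; exact hAV (Set.mem_range_self _) : G x ∈ V)⟩ : ↥V)
      = ⟨ψ (f ⟨x, hx⟩), hAV (Set.mem_range_self _)⟩ := Subtype.ext (hGA x hx)
  calc r ⟨G x, _⟩ = r ⟨ψ (f ⟨x, hx⟩), hAV (Set.mem_range_self _)⟩ := congrArg r h2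
    _ = hψe.isEmbedding.toHomeomorph.symm
          ⟨ψ (f ⟨x, hx⟩), Set.mem_range_self _⟩ := hr _ (Set.mem_range_self _)
    _ = f ⟨x, hx⟩ := hψe.isEmbedding.toHomeomorph.symm_apply_eq.mpr
          (Subtype.ext rfl)

end ANRExt

section Extract

theorem lind_extract {L X : Type} [TopologicalSpace L] [TopologicalSpace X] (hne : Nonempty X)
    {α : Ordinal.{0}} (h : LInd L X ≤ Dim.ofOrdinal α) : ∃ γ ≤ α, LIndLE L X γ := by
  rw [LInd, if_neg (not_isEmpty_of_nonempty X)] at h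
  by_cases hex : ∃ γ, LIndLE L X γ
  · rw [if_pos hex] at h
    refine ⟨sInf {γ | LIndLE L X γ}, ?_, csInf_mem hex⟩
    simpa [Dim.ofOrdinal] using h
  · rw [if_neg hex] at h
    exact absurd h (by simp [Dim.ofOrdinal])

theorem lind_extract_eq {L X : Type} [TopologicalSpace L] [TopologicalSpace X]
    (h : LInd L X = Dim.ofOrdinal 0) : Nonempty X ∧ LIndLE L X 0 := by
  by_cases hne : Nonempty X
  · refine ⟨hne, ?_⟩
    obtain ⟨γ, hγ, hLE⟩ := lind_extract hne h.le
    rwa [nonpos_iff_eq_zero.mp hγ] at hLE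
  · rw [LInd, if_pos (not_nonempty_iff.mp hne)] at h
    exact absurd h (by
      simp only [Dim.minusOne, Dim.ofOrdinal, WithTop.coe_inj]
      exact fun hh => by simp at hh)

end Extract

-- STATEMENT 3
theorem statement3 (L : Type) [MetricSpace L] [CompactSpace L]
    (hANR : IsANR L) (hL : ¬ContractibleSpace L)
    (X : Type) [TopologicalSpace X] [T1Space X] [NormalSpace X]
    (F : Set X) (hF : IsClosed F) (α : Ordinal.{0})
    (h0 : LInd L (↥F) = Dim.ofOrdinal 0)
    (hE : ∀ E : Set X, IsClosed E → Disjoint E F → LInd L (↥E) ≤ Dim.ofOrdinal α) :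
    LInd L X ≤ Dim.ofOrdinal α := by
  obtain ⟨hFne, hF0⟩ := lind_extract_eq h0
  have hLne : Nonempty L := by
    haveI : IsEmpty ↥(∅ : Set ↥F) := Set.isEmpty_coe_sort.mpr rfl
    obtain ⟨U, hUo, hsub, ⟨g, -⟩, hrest⟩ := (LIndLE_iff L (↥F) 0).mp hF0 ∅ isClosed_empty
      ⟨isEmptyElim, continuous_def.mpr fun s _ => by
        rw [Set.eq_empty_of_isEmpty (isEmptyElim ⁻¹' s)]; exact isOpen_empty⟩
    have hUuniv : U = Set.univ := by
      rcases hrest with h | ⟨β, -⟩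
      · exact Set.compl_empty_iff.mp h
      · exact absurd β.2 (not_lt_of_ge (zero_le (a := β.1)))
    exact ⟨g ⟨hFne.some, by rw [hUuniv]; trivial⟩⟩
  haveI := hLne
  by_cases hXe : IsEmpty X
  · rw [LInd, if_pos hXe]
    exact WithTop.coe_le_coe.mpr bot_le
  · have hLE : LIndLE L X α := by
      rw [LIndLE_iff]
      intro C hC f
      -- Step 1: extend f over F
      have hA0 : IsClosed ((Subtype.val : ↥F → X) ⁻¹' C) := hC.preimage continuous_subtype_val
      obtain ⟨U₁, hU₁o, hsub₁, ⟨g₁, hg₁⟩, hrest₁⟩ := (LIndLE_iff L (↥F) 0).mp hF0 _ hA0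
        ⟨fun y => f ⟨y.1.1, y.2⟩, f.continuous.comp (Continuous.subtype_mk
          (continuous_subtype_val.comp continuous_subtype_val) _)⟩
      have hU₁univ : U₁ = Set.univ := by
        rcases hrest₁ with h | ⟨β, -⟩
        · exact Set.compl_empty_iff.mp h
        · exact absurd β.2 (not_lt_of_ge (zero_le (a := β.1)))
      have hU₁mem : ∀ y : ↥F, y ∈ U₁ := fun y => by rw [hU₁univ]; trivial
      have hgF : ∃ gF : C(↥F, L), ∀ (y : ↥F) (hy : y.1 ∈ C), gF y = f ⟨y.1, hy⟩ :=
        ⟨g₁.comp ⟨fun y => ⟨y, hU₁mem y⟩, Continuous.subtype_mk continuous_id _⟩,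
          fun y hy => hg₁ y hy⟩
      obtain ⟨gF, hgF⟩ := hgF
      -- Step 2: glue f and gF into H on C ∪ F
      obtain ⟨H, hHC, hHF⟩ : ∃ H : X → L, (∀ (x : X) (hx : x ∈ C), H x = f ⟨x, hx⟩) ∧
          ∀ y : ↥F, H y.1 = gF y := by
        refine ⟨fun x => if hx : x ∈ F then gF ⟨x, hx⟩
          else if hx' : x ∈ C then f ⟨x, hx'⟩ else hLne.some, ?_, ?_⟩
        · intro x hx
          dsimp only
          by_cases hxF : x ∈ F
          · rw [dif_pos hxF]; exact hgF ⟨x, hxF⟩ hx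
          · rw [dif_neg hxF, dif_pos hx]
        · intro y; dsimp only; rw [dif_pos y.2]
      have hHcC : ContinuousOn H C := by
        apply continuousOn_iff_continuous_restrict.mpr
        have hr : C.restrict H = fun y => f y := funext fun y => hHC y.1 y.2
        rw [show C.domRestrict H = C.restrict H from rfl, hr]; exact f.continuous
      have hHcF : ContinuousOn H F := by
        apply continuousOn_iff_continuous_restrict.mpr
        have hr : F.restrict H = fun y => gF y := funext fun y => hHF y
        rw [show F.domRestrict H = F.restrict H from rfl, hr]; exact gF.continuous
      have hHcont : ContinuousOn H (C ∪ F) :=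
        contOn_paste hC hF (fun x hx => hx)
          (hHcC.mono Set.inter_subset_left) (hHcF.mono Set.inter_subset_left)
      -- Step 3: extend H over a neighbourhood W
      obtain ⟨W, hWo, hsubW, gW, hgW⟩ := anr_ext L hANR (hC.union hF)
        ⟨(C ∪ F).restrict H, continuousOn_iff_continuous_restrict.mp hHcont⟩
      obtain ⟨V, hVo, hsubV, hclV⟩ := normal_exists_closure_subset (hC.union hF) hWo hsubW
      by_cases hE0 : Vᶜ = (∅ : Set X)
      · have hVuniv : V = Set.univ := Set.compl_empty_iff.mp hE0
        have hWuniv : W = Set.univ := Set.eq_univ_of_univ_subset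
          (by rw [← hVuniv]; exact subset_closure.trans hclV)
        refine ⟨W, hWo, fun x _ => by rw [hWuniv]; trivial, ⟨gW, ?_⟩,
          Or.inl (by rw [hWuniv, Set.compl_univ])⟩
        intro x hx
        exact (hgW x (Or.inl hx)).trans (hHC x hx)
      · have hEne : Nonempty ↥(Vᶜ) :=
          Set.nonempty_coe_sort.mpr (Set.nonempty_iff_ne_empty.mpr hE0)
        have hEcl : IsClosed (Vᶜ) := hVo.isClosed_compl
        have hdisj : Disjoint (Vᶜ) F :=
          Set.disjoint_left.mpr fun x hxE hxF => hxE (hsubV (Or.inr hxF))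
        obtain ⟨γ, hγα, hγ⟩ := lind_extract hEne (hE (Vᶜ) hEcl hdisj)
        have hAEc : IsClosed ((Subtype.val : ↥(Vᶜ) → X) ⁻¹' closure V) :=
          isClosed_closure.preimage continuous_subtype_val
        obtain ⟨V₁, hV₁o, hsubV₁, ⟨g₁', hg₁'⟩, hrest₁'⟩ := (LIndLE_iff L (↥(Vᶜ)) γ).mp hγ _ hAEc
          ⟨fun y => gW ⟨y.1.1, hclV y.2⟩, gW.continuous.comp (Continuous.subtype_mk
            (continuous_subtype_val.comp continuous_subtype_val) _)⟩
        obtain ⟨O, hOo, hOeq⟩ := isOpen_induced_iff.mp hV₁o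
        have hmemV₁ : ∀ (x : X) (hx : x ∈ Vᶜ ∩ O), (⟨x, hx.1⟩ : ↥(Vᶜ)) ∈ V₁ := fun x hx => by
          rw [← hOeq]; exact hx.2
        obtain ⟨G, hG1, hG2⟩ : ∃ G : X → L,
            (∀ (x : X) (hx : x ∈ Vᶜ ∩ O), G x = g₁' ⟨⟨x, hx.1⟩, hmemV₁ x hx⟩) ∧
            ∀ (x : X) (hx : x ∈ W), x ∉ Vᶜ ∩ O → G x = gW ⟨x, hx⟩ := by
          refine ⟨fun x => if hx : x ∈ Vᶜ ∩ O then g₁' ⟨⟨x, hx.1⟩, hmemV₁ x hx⟩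
            else if hx' : x ∈ W then gW ⟨x, hx'⟩ else hLne.some, ?_, ?_⟩
          · intro x hx; dsimp only; rw [dif_pos hx]
          · intro x hx hnx; dsimp only; rw [dif_neg hnx, dif_pos hx]
        have hagree : ∀ (x : X) (hcl : x ∈ closure V) (hx : x ∈ Vᶜ ∩ O),
            g₁' ⟨⟨x, hx.1⟩, hmemV₁ x hx⟩ = gW ⟨x, hclV hcl⟩ := fun x hcl hx =>
          hg₁' ⟨x, hx.1⟩ hcl
        have hUo : IsOpen (V ∪ O) := hVo.union hOo
        have hCU : C ⊆ V ∪ O := fun x hx => Or.inl (hsubV (Or.inl hx))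
        have hGcont : ContinuousOn G (V ∪ O) := by
          have hu : V ∪ O ⊆ closure V ∪ Vᶜ := fun x hx => by
            by_cases hxV : x ∈ V
            · exact Or.inl (subset_closure hxV)
            · exact Or.inr hxV
          apply contOn_paste isClosed_closure hEcl hu ?_ ?_
          · apply continuousOn_iff_continuous_restrict.mpr
            have hr : (closure V ∩ (V ∪ O)).restrict G = fun y => gW ⟨y.1, hclV y.2.1⟩ := by
              funext y
              by_cases hy : y.1 ∈ Vᶜ ∩ O
              · rw [show (closure V ∩ (V ∪ O)).restrict G y = G y.1 from rfl, hG1 y.1 hy,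
                  hagree y.1 y.2.1 hy]
              · exact hG2 y.1 (hclV y.2.1) hy
            rw [show (closure V ∩ (V ∪ O)).domRestrict G = (closure V ∩ (V ∪ O)).restrict G from rfl, hr]
            exact gW.continuous.comp (Continuous.subtype_mk continuous_subtype_val _)
          · apply continuousOn_iff_continuous_restrict.mpr
            have hmem' : ∀ y : ↥(Vᶜ ∩ (V ∪ O)), y.1 ∈ Vᶜ ∩ O := fun y =>
              ⟨y.2.1, (y.2.2).resolve_left y.2.1⟩
            have hr : (Vᶜ ∩ (V ∪ O)).restrict G =
                fun y => g₁' ⟨⟨y.1, y.2.1⟩, hmemV₁ y.1 (hmem' y)⟩ := by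
              funext y
              exact hG1 y.1 (hmem' y)
            rw [show (Vᶜ ∩ (V ∪ O)).domRestrict G = (Vᶜ ∩ (V ∪ O)).restrict G from rfl, hr]
            exact g₁'.continuous.comp (Continuous.subtype_mk (Continuous.subtype_mk
              continuous_subtype_val _) _)
        refine ⟨V ∪ O, hUo, hCU,
          ⟨⟨(V ∪ O).restrict G, continuousOn_iff_continuous_restrict.mp hGcont⟩, ?_⟩, ?_⟩
        · intro x hx
          have hxV : x ∈ V := hsubV (Or.inl hx)
          have h1 : G x = gW ⟨x, hclV (subset_closure hxV)⟩ :=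
            hG2 x (hclV (subset_closure hxV)) fun h => h.1 hxV
          show G x = f ⟨x, hx⟩
          rw [h1]
          exact (hgW x (Or.inl hx)).trans (hHC x hx)
        · rcases hrest₁' with h | ⟨β, hβ⟩
          · left
            rw [Set.compl_union]
            ext x
            simp only [Set.mem_inter_iff, Set.mem_empty_iff_false, iff_false]
            rintro ⟨hx1, hx2⟩
            have hmem : (⟨x, hx1⟩ : ↥(Vᶜ)) ∈ V₁ᶜ := fun hmem => hx2 (by
              rw [← hOeq] at hmem; exact hmem)
            rw [h] at hmem
            exact hmem
          · right
            refine ⟨⟨β.1, lt_of_lt_of_le β.2 hγα⟩, ?_⟩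
            have hψmem : ∀ y : ↥((V ∪ O)ᶜ), y.1 ∈ Vᶜ := fun y h => y.2 (Or.inl h)
            have hψmem2 : ∀ y : ↥((V ∪ O)ᶜ), (⟨y.1, hψmem y⟩ : ↥(Vᶜ)) ∈ V₁ᶜ := fun y hmem =>
              y.2 (Or.inr (by rw [← hOeq] at hmem; exact hmem))
            let eUV : ↥((V ∪ O)ᶜ) ≃ₜ ↥(V₁ᶜ) :=
              { toFun := fun y => ⟨⟨y.1, hψmem y⟩, hψmem2 y⟩
                invFun := fun z => ⟨z.1.1, fun h => h.elim (fun hV => z.1.2 hV)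
                  fun hO => z.2 (hmemV₁ z.1.1 ⟨z.1.2, hO⟩)⟩
                left_inv := fun y => rfl
                right_inv := fun z => rfl
                continuous_toFun := Continuous.subtype_mk (Continuous.subtype_mk
                  continuous_subtype_val _) _
                continuous_invFun := Continuous.subtype_mk
                  (continuous_subtype_val.comp continuous_subtype_val) _ }
            exact lindle_transfer L β.1 _ _ _ _ _ eUV.isClosedEmbedding hβ
    rw [LInd, if_neg hXe, if_pos ⟨α, hLE⟩]
    have h1 : sInf {γ | LIndLE L X γ} ≤ α := csInf_le' hLE
    simpa [Dim.ofOrdinal] using h1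

end
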